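/- Let p be a prime and D a 1-(v,k,r) design with k ≡ 0 mod p and all block intersection numbers ≡ 0 mod p. Let G be an automorphism group of D acting with all point orbits of length w and all block orbits of length w, where furthermore the integer quantities satisfy the orbit-matrix identities. Then the rows of the orbit matrix O, reduced mod p, span a self-orthogonal code over F_p of length v/w. -/

import Mathlib

open Matrix Finset

/-- For a 1-(v,k,r) design with p ∣ k and all block intersection numbers
divisible by p, and an automorphism group with all point orbits and all block orbits
of length w, the rows of the orbit matrix reduced mod p span a self-orthogonal code
over F_p of length v/w. -/
theorem stmt7 {P B G : Type*} [Fintype P] [Fintype B] [Group G]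
    [MulAction G P] [MulAction G B]
    (Inc : B → P → Prop) [∀ x, DecidablePred (Inc x)]
    (hGInc : ∀ (g : G) (x : B) (pt : P), Inc x pt ↔ Inc (g • x) (g • pt))
    (p : ℕ) (hp : p.Prime) (k r : ℕ)
    (hk : ∀ x : B, (Finset.univ.filter (fun pt => Inc x pt)).card = k)
    (hr : ∀ pt : P, (Finset.univ.filter (fun x => Inc x pt)).card = r)
    (hkp : p ∣ k)
    (hint : ∀ x x' : B, x ≠ x' →
      p ∣ (Finset.univ.filter (fun pt => Inc x pt ∧ Inc x' pt)).card)
    (n m w : ℕ) (Vo : Fin n → Finset P) (Bo : Fin m → Finset B)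
    (hVo : ∀ j, ∃ pt, (Vo j : Set P) = MulAction.orbit G pt)
    (hVpart : ∀ pt : P, ∃! j, pt ∈ Vo j)
    (hVw : ∀ j, (Vo j).card = w)
    (hBo : ∀ i, ∃ x, (Bo i : Set B) = MulAction.orbit G x)
    (hBpart : ∀ x : B, ∃! i, x ∈ Bo i)
    (hBw : ∀ i, (Bo i).card = w)
    (hnw : n * w = Fintype.card P)
    (O : Matrix (Fin m) (Fin n) ℕ)
    (hO : ∀ i j, ∀ x ∈ Bo i, O i j = ((Vo j).filter (fun pt => Inc x pt)).card)
    (A : Fin m → Fin n → ZMod p)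
    (hA : A = fun i j => ((O i j : ℕ) : ZMod p)) :
    ∀ u ∈ Submodule.span (ZMod p) (Set.range A),
      ∀ x ∈ Submodule.span (ZMod p) (Set.range A), u ⬝ᵥ x = 0 := by
  classical
  -- the coordinate function for the point-orbit partition
  have key : ∀ s t : Fin m, A s ⬝ᵥ A t = 0 := by
    intro s t
    -- choose a block in Bo s
    obtain ⟨xs, hxs⟩ : ∃ xs, xs ∈ Bo s := by
      obtain ⟨x0, h⟩ := hBo s
      exact ⟨x0, by rw [← Finset.mem_coe, h]; exact MulAction.mem_orbit_self x0⟩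
    -- count function
    set c : P → ℕ := fun pt => ((Bo t).filter (fun x' => Inc x' pt)).card with hc_def
    -- Bo t is G-stable
    have hBstab : ∀ (g : G) (x' : B), x' ∈ Bo t → g • x' ∈ Bo t := by
      intro g x' hx'
      obtain ⟨x0, h⟩ := hBo t
      rw [← Finset.mem_coe, h] at hx' ⊢
      obtain ⟨h', rfl⟩ := hx'
      exact ⟨g * h', mul_smul g h' x0⟩
    -- c is G-invariant
    have hcg : ∀ (g : G) (pt : P), c (g • pt) = c pt := by
      intro g pt
      refine Finset.card_nbij' (fun y => g⁻¹ • y) (fun x' => g • x') ?_ ?_ ?_ ?_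
      · intro y hy
        simp only [Finset.mem_coe, Finset.mem_filter] at hy ⊢
        refine ⟨hBstab g⁻¹ y hy.1, ?_⟩
        have h := (hGInc g⁻¹ y (g • pt)).mp hy.2
        rwa [inv_smul_smul] at h
      · intro x' hx'
        simp only [Finset.mem_coe, Finset.mem_filter] at hx' ⊢
        exact ⟨hBstab g x' hx'.1, (hGInc g x' pt).mp hx'.2⟩
      · intro y _; simp
      · intro x' _; simp
    -- c is constant O t j on Vo j
    have hc : ∀ j, ∀ pt ∈ Vo j, c pt = O t j := by
      intro j pt hpt
      obtain ⟨pt0, hVj⟩ := hVo j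
      have hmem : ∀ q ∈ Vo j, c q = c pt0 := by
        intro q hq
        rw [← Finset.mem_coe, hVj] at hq
        obtain ⟨g, rfl⟩ := hq
        exact hcg g pt0
      have hw : 0 < w := by
        rw [← hVw j]; exact Finset.card_pos.mpr ⟨pt, hpt⟩
      have hsum : ∑ q ∈ Vo j, c q = w * O t j := by
        have : ∑ q ∈ Vo j, c q
            = ∑ q ∈ Vo j, ∑ x' ∈ Bo t, (if Inc x' q then 1 else 0) := by
          exact Finset.sum_congr rfl fun q _ => Finset.card_filter _ _
        rw [this, Finset.sum_comm]
        have : ∀ x' ∈ Bo t, (∑ q ∈ Vo j, if Inc x' q then 1 else 0) = O t j := by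
          intro x' hx'
          rw [← Finset.card_filter, hO t j x' hx']
        rw [Finset.sum_congr rfl this, Finset.sum_const, hBw t, smul_eq_mul]
      have hsum2 : ∑ q ∈ Vo j, c q = w * c pt0 := by
        rw [Finset.sum_congr rfl hmem, Finset.sum_const, hVw j, smul_eq_mul]
      rw [hmem pt hpt]
      exact Nat.eq_of_mul_eq_mul_left hw (hsum2.symm.trans hsum)
    -- partition of a filtered count over the point orbits
    have hpart : ∀ (Q : P → Prop) [DecidablePred Q],
        ∑ j, ((Vo j).filter Q).card = (Finset.univ.filter Q).card := by
      intro Q _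
      set f : P → Fin n := fun pt => (hVpart pt).choose with hf_def
      have hf1 : ∀ pt, pt ∈ Vo (f pt) := fun pt => (hVpart pt).choose_spec.1
      have hf2 : ∀ pt j, pt ∈ Vo j → f pt = j := by
        intro pt j h
        exact ((hVpart pt).choose_spec.2 j h).symm
      rw [Finset.card_eq_sum_card_fiberwise (f := f) (t := Finset.univ)
        (fun pt _ => Finset.mem_univ _)]
      refine Finset.sum_congr rfl fun j _ => ?_
      congr 1
      ext pt
      simp only [Finset.mem_filter, Finset.mem_univ, true_and]
      constructor
      · rintro ⟨hv, hq⟩; exact ⟨hq, hf2 pt j hv⟩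
      · rintro ⟨hq, rfl⟩; exact ⟨hf1 pt, hq⟩
    -- the main counting identity
    have hN : ∀ j, ∑ x' ∈ Bo t,
        ((Vo j).filter (fun pt => Inc xs pt ∧ Inc x' pt)).card = O s j * O t j := by
      intro j
      have h1 : ∑ x' ∈ Bo t, ((Vo j).filter (fun pt => Inc xs pt ∧ Inc x' pt)).card
          = ∑ q ∈ Vo j, ∑ x' ∈ Bo t, (if Inc xs q ∧ Inc x' q then 1 else 0) := by
        rw [Finset.sum_comm]
        exact Finset.sum_congr rfl fun x' _ => Finset.card_filter _ _
      have h2 : ∀ q ∈ Vo j, (∑ x' ∈ Bo t, if Inc xs q ∧ Inc x' q then 1 else 0)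
          = if Inc xs q then c q else 0 := by
        intro q hq
        by_cases h : Inc xs q
        · simp only [h, true_and, if_true]
          exact (Finset.card_filter _ _).symm
        · simp [h]
      rw [h1, Finset.sum_congr rfl h2, Finset.sum_ite, Finset.sum_const_zero, add_zero,
        Finset.sum_congr rfl (fun q hq => hc j q (Finset.mem_of_mem_filter q hq)),
        Finset.sum_const, smul_eq_mul, ← hO s j xs hxs]
    -- divisibility
    have hdiv : p ∣ ∑ j, O s j * O t j := by
      have heq : ∑ j, O s j * O t j
          = ∑ x' ∈ Bo t, (Finset.univ.filter (fun pt => Inc xs pt ∧ Inc x' pt)).card := by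
        rw [Finset.sum_congr rfl fun j _ => (hN j).symm, Finset.sum_comm]
        exact Finset.sum_congr rfl fun x' _ => hpart _
      rw [heq]
      refine Finset.dvd_sum fun x' _ => ?_
      by_cases hxx : xs = x'
      · subst hxx
        have : (Finset.univ.filter (fun pt => Inc xs pt ∧ Inc xs pt)).card = k := by
          rw [← hk xs]; congr 1; ext pt; simp
        rw [this]; exact hkp
      · exact hint xs x' hxx
    -- conclude in ZMod p
    subst hA
    show (∑ j, ((O s j : ℕ) : ZMod p) * ((O t j : ℕ) : ZMod p)) = 0
    have hz : ((∑ j, O s j * O t j : ℕ) : ZMod p) = 0 :=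
      (ZMod.natCast_eq_zero_iff _ _).mpr hdiv
    rw [Nat.cast_sum] at hz
    simpa [Nat.cast_mul] using hz
  intro u hu x hx
  induction hu, hx using Submodule.span_induction₂ with
  | mem_mem u x hu hx =>
    obtain ⟨s, rfl⟩ := hu
    obtain ⟨t, rfl⟩ := hx
    exact key s t
  | zero_left y hy => exact zero_dotProduct y
  | zero_right x hx => exact dotProduct_zero x
  | add_left x y z _ _ _ h1 h2 => rw [add_dotProduct, h1, h2, add_zero]
  | add_right x y z _ _ _ h1 h2 => rw [dotProduct_add, h1, h2, add_zero]
  | smul_left r x y _ _ h => rw [smul_dotProduct, h, smul_zero]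
  | smul_right r x y _ _ h => rw [dotProduct_smul, h, smul_zero]
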